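/- arXiv:1811.12759 — 2 statements merged into one kernel-verified Lean document; each statement's English description precedes it below -/
import Mathlib

section
/- Let S ⊆ ℝᵖ be a polyhedron {s : A_S s ≤ b_S}, M ∈ ℝ^{p×k}, B ⊆ ℝᵏ a nonempty bounded set, and ξ ∈ ℝᵖ. Then ξ ∈ S ⊖ MB if and only if for every row i, ⟨Mᵀ a_iᵀ, z⟩ ≤ b_i − ⟨a_iᵀ, ξ⟩ for all z ∈ B; equivalently, h_B(Mᵀ a_iᵀ) ≤ b_i − ⟨a_iᵀ, ξ⟩ for all i. -/
open Matrix

theorem stmt_7 {m p k : ℕ} (A : Matrix (Fin m) (Fin p) ℝ) (b : Fin m → ℝ)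
    (M : Matrix (Fin p) (Fin k) ℝ) (B : Set (Fin k → ℝ))
    (hne : B.Nonempty) (hbd : Bornology.IsBounded B) (ξ : Fin p → ℝ) :
    ((∀ y ∈ (fun z => M.mulVec z) '' B, ξ + y ∈ {s | ∀ i, A.mulVec s i ≤ b i}) ↔
      (∀ i, ∀ z ∈ B, M.transpose.mulVec (A i) ⬝ᵥ z ≤ b i - A i ⬝ᵥ ξ)) ∧
    ((∀ y ∈ (fun z => M.mulVec z) '' B, ξ + y ∈ {s | ∀ i, A.mulVec s i ≤ b i}) ↔
      (∀ i, sSup ((fun z => M.transpose.mulVec (A i) ⬝ᵥ z) '' B) ≤ b i - A i ⬝ᵥ ξ)) := by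
  have key : ∀ (i : Fin m) (z : Fin k → ℝ),
      A.mulVec (ξ + M.mulVec z) i = A i ⬝ᵥ ξ + M.transpose.mulVec (A i) ⬝ᵥ z := by
    intro i z
    rw [Matrix.mulVec_add, Pi.add_apply]
    show A i ⬝ᵥ ξ + A i ⬝ᵥ (M.mulVec z) = _
    rw [Matrix.dotProduct_mulVec, Matrix.mulVec_transpose]
  have h1 : (∀ y ∈ (fun z => M.mulVec z) '' B, ξ + y ∈ {s | ∀ i, A.mulVec s i ≤ b i}) ↔
      (∀ i, ∀ z ∈ B, M.transpose.mulVec (A i) ⬝ᵥ z ≤ b i - A i ⬝ᵥ ξ) := by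
    constructor
    · intro h i z hz
      have := h _ ⟨z, hz, rfl⟩ i
      rw [key] at this; linarith
    · intro h y hy i
      obtain ⟨z, hz, rfl⟩ := hy
      rw [key]
      have := h i z hz; linarith
  refine ⟨h1, h1.trans ?_⟩
  apply forall_congr'
  intro i
  set v := M.transpose.mulVec (A i) with hv
  have hlin : Continuous (fun z : Fin k → ℝ => v ⬝ᵥ z) := by
    have : (fun z : Fin k → ℝ => v ⬝ᵥ z) =
        fun z => ∑ j, v j * z j := rfl
    rw [this]
    exact continuous_finset_sum _ fun j _ => (continuous_const.mul (continuous_apply j))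
  have hbdd : BddAbove ((fun z => v ⬝ᵥ z) '' B) := by
    let flm : (Fin k → ℝ) →L[ℝ] ℝ :=
      { toFun := fun z => v ⬝ᵥ z
        map_add' := fun x y => dotProduct_add v x y
        map_smul' := fun c x => by simp [dotProduct_smul]
        cont := hlin }
    have : (fun z : Fin k → ℝ => v ⬝ᵥ z) = flm := by ext z; rfl
    rw [this]
    exact (flm.lipschitz.isBounded_image hbd).bddAbove
  rw [csSup_le_iff hbdd (hne.image _)]
  exact ⟨fun h x ⟨z, hz, he⟩ => he ▸ h z hz, fun h z hz => h _ ⟨z, hz, rfl⟩⟩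
end

section
/- Let S̄ = {z ∈ ℝᵏ : Āz ≤ b̄} be a polyhedron, r ∈ ℝᵏ with r ≥ 0, z ∈ ℝᵏ, and λ ≥ 0. If Āz + (Ā)⁺ r λ ≤ b̄, where (Ā)⁺ is the matrix of positive parts of entries of Ā, then the hyper-rectangle B(z, z + λr) is contained in S̄. -/
open Matrix

theorem stmt_13 {m k : ℕ} (A : Matrix (Fin m) (Fin k) ℝ) (b : Fin m → ℝ)
    (r : Fin k → ℝ) (hr : 0 ≤ r) (z : Fin k → ℝ) (l : ℝ) (hl : 0 ≤ l)
    (h : ∀ i, A.mulVec z i + (∑ j : Fin k, max (A i j) 0 * r j) * l ≤ b i) :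
    {x : Fin k → ℝ | ∀ j, z j ≤ x j ∧ x j ≤ z j + l * r j} ⊆
      {x : Fin k → ℝ | ∀ i, A.mulVec x i ≤ b i} := by
  intro x hx i
  refine le_trans ?_ (h i)
  simp only [mulVec, dotProduct]
  rw [Finset.sum_mul, ← Finset.sum_add_distrib]
  apply Finset.sum_le_sum
  intro j _
  obtain ⟨h1, h2⟩ := hx j
  rcases le_or_gt (A i j) 0 with hA | hA
  · have : max (A i j) 0 = 0 := max_eq_right hA
    rw [this]
    ring_nf
    nlinarith [mul_le_mul_of_nonpos_left h1 hA]
  · have hmax : max (A i j) 0 = A i j := max_eq_left hA.le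
    rw [hmax]
    nlinarith [mul_le_mul_of_nonneg_left h2 hA.le]
end
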